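/- Let f : ℝ^d → ℝ be L₀-Lipschitz, μ > 0, ν ≥ 0, u ~ N(0, I_d), and v₁, v₂ ~ N(0, I_d) independent of u and of each other. Define the noisy two-point gradient estimator g_{μ,ν}(x) = ((f(x + μ u + ν v₁) − f(x + ν v₂))/μ) · u. Then E[‖g_{μ,ν}(x)‖²] ≤ C · L₀² · d² · (ν/μ + c)² for absolute constants C, c (e.g., E[‖g_{μ,ν}(x)‖²] ≤ 4 L₀² (d+4)² (ν/μ + 1)² suffices). -/

import Mathlib

open MeasureTheory ProbabilityTheory Real
open scoped ENNReal NNReal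

noncomputable def stdGaussian (d : ℕ) : Measure (EuclideanSpace ℝ (Fin d)) :=
  (Measure.pi fun _ : Fin d => gaussianReal 0 1).map
    (EuclideanSpace.equiv (Fin d) ℝ).symm

lemma integrable_pow_mul_gauss (k : ℕ) :
    Integrable (fun x : ℝ => x ^ k * Real.exp (-(1/2) * x ^ 2)) := by
  have h := integrable_rpow_mul_exp_neg_mul_sq (b := 1/2) (by norm_num)
    (s := (k : ℝ)) (lt_of_lt_of_le (by norm_num) (Nat.cast_nonneg k))
  simpa [Real.rpow_natCast] using h

lemma J_val (k : ℕ) :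
    ∫ x : ℝ, x ^ (2 * k) * Real.exp (-(1/2) * x ^ 2) =
      2 * ((1/2 : ℝ) ^ (-(((2 * k : ℕ) : ℝ) + 1) / 2) * (1/2) *
        Real.Gamma ((((2 * k : ℕ) : ℝ) + 1) / 2)) := by
  calc ∫ x : ℝ, x ^ (2 * k) * Real.exp (-(1/2) * x ^ 2)
      = ∫ x : ℝ, |x| ^ (2 * k) * Real.exp (-(1/2) * |x| ^ 2) := by
        refine integral_congr_ae (Filter.Eventually.of_forall fun x => ?_)
        simp only [pow_mul, sq_abs]
    _ = 2 * ∫ t in Set.Ioi (0:ℝ), t ^ (2 * k) * Real.exp (-(1/2) * t ^ 2) :=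
        integral_comp_abs (f := fun t => t ^ (2 * k) * Real.exp (-(1/2) * t ^ 2))
    _ = 2 * ∫ t in Set.Ioi (0:ℝ), t ^ (((2 * k : ℕ)) : ℝ) * Real.exp (-(1/2) * t ^ (2:ℝ)) := by
        congr 1
        refine integral_congr_ae (Filter.Eventually.of_forall fun t => ?_)
        beta_reduce
        rw [Real.rpow_natCast, show (2:ℝ) = ((2:ℕ) : ℝ) by norm_num, Real.rpow_natCast]
    _ = _ := by
        rw [integral_rpow_mul_exp_neg_mul_rpow (by norm_num)
          (lt_of_lt_of_le (by norm_num) (Nat.cast_nonneg _)) (by norm_num : (0:ℝ) < 1/2)]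

lemma gauss_pdf_eq (x : ℝ) :
    gaussianPDFReal 0 1 x = (Real.sqrt (2*π))⁻¹ * Real.exp (-(1/2) * x^2) := by
  simp only [gaussianPDFReal, NNReal.coe_one, mul_one, sub_zero]
  rw [show -x^2/2 = -(1/2)*x^2 by ring]

lemma gauss_integral (g : ℝ → ℝ) :
    ∫ x, g x ∂(gaussianReal 0 1)
      = ∫ x, (Real.sqrt (2*π))⁻¹ * (g x * Real.exp (-(1/2) * x^2)) := by
  rw [gaussianReal_of_var_ne_zero 0 one_ne_zero]
  have hm : Measurable fun x => (gaussianPDFReal 0 1 x).toNNReal :=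
    (measurable_gaussianPDFReal 0 1).real_toNNReal
  have hd : gaussianPDF 0 1 = fun x => ((gaussianPDFReal 0 1 x).toNNReal : ℝ≥0∞) := rfl
  rw [hd, integral_withDensity_eq_integral_smul hm]
  refine integral_congr_ae (Filter.Eventually.of_forall fun x => ?_)
  show (gaussianPDFReal 0 1 x).toNNReal • g x = _
  rw [NNReal.smul_def, smul_eq_mul, Real.coe_toNNReal _ (gaussianPDFReal_nonneg _ _ _),
    gauss_pdf_eq]
  ring

lemma integrable_pow_gauss (k : ℕ) : Integrable (fun x : ℝ => x ^ k) (gaussianReal 0 1) := by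
  rw [gaussianReal_of_var_ne_zero 0 one_ne_zero]
  have hm : Measurable fun x => (gaussianPDFReal 0 1 x).toNNReal :=
    (measurable_gaussianPDFReal 0 1).real_toNNReal
  have hd : gaussianPDF 0 1 = fun x => ((gaussianPDFReal 0 1 x).toNNReal : ℝ≥0∞) := rfl
  rw [hd, integrable_withDensity_iff_integrable_smul hm]
  have : (fun x : ℝ => ((gaussianPDFReal 0 1 x).toNNReal : ℝ≥0) • x ^ k)
      = fun x : ℝ => (Real.sqrt (2*π))⁻¹ * (x ^ k * Real.exp (-(1/2) * x^2)) := by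
    funext x
    rw [NNReal.smul_def, smul_eq_mul, Real.coe_toNNReal _ (gaussianPDFReal_nonneg _ _ _),
      gauss_pdf_eq]
    ring
  rw [this]
  exact (integrable_pow_mul_gauss k).const_mul _

lemma hG32 : Real.Gamma (3/2 : ℝ) = Real.sqrt π / 2 := by
  rw [show (3/2 : ℝ) = 1/2 + 1 by norm_num, Real.Gamma_add_one (by norm_num),
    Real.Gamma_one_half_eq]
  ring

lemma hG52 : Real.Gamma (5/2 : ℝ) = 3 * Real.sqrt π / 4 := by
  rw [show (5/2 : ℝ) = 3/2 + 1 by norm_num, Real.Gamma_add_one (by norm_num), hG32]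
  ring

lemma hp2 (y : ℝ) : (1/2 : ℝ) ^ (-y) = (2:ℝ) ^ y := by
  rw [one_div, Real.inv_rpow (by norm_num), ← Real.rpow_neg (by norm_num), neg_neg]

lemma h232 : (2:ℝ) ^ ((3:ℝ)/2) = 2 * Real.sqrt 2 := by
  rw [show (3:ℝ)/2 = 1 + 1/2 by norm_num, Real.rpow_add (by norm_num), Real.rpow_one,
    ← Real.sqrt_eq_rpow]

lemma h252 : (2:ℝ) ^ ((5:ℝ)/2) = 4 * Real.sqrt 2 := by
  rw [show (5:ℝ)/2 = 2 + 1/2 by norm_num, Real.rpow_add (by norm_num),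
    ← Real.sqrt_eq_rpow, show (2:ℝ)^(2:ℝ) = 4 by
      rw [show (2:ℝ) = ((2:ℕ):ℝ) by norm_num, Real.rpow_natCast]; norm_num]

lemma moment_two : ∫ x, x^2 ∂(gaussianReal 0 1) = 1 := by
  rw [gauss_integral, integral_const_mul]
  have h := J_val 1
  norm_num at h
  simp only [neg_mul] at h ⊢
  rw [h, hp2, h232, hG32,
    show 2 * (2*Real.sqrt 2 * (1/2) * (Real.sqrt π/2)) = Real.sqrt 2 * Real.sqrt π by ring,
    ← Real.sqrt_mul (by norm_num)]
  exact inv_mul_cancel₀ (ne_of_gt (Real.sqrt_pos.mpr (by positivity)))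

lemma moment_four : ∫ x, x^4 ∂(gaussianReal 0 1) = 3 := by
  rw [gauss_integral, integral_const_mul]
  have h := J_val 2
  norm_num at h
  simp only [neg_mul] at h ⊢
  rw [h, hp2, h252, hG52,
    show 2 * (4*Real.sqrt 2 * (1/2) * (3*Real.sqrt π/4)) = 3 * (Real.sqrt 2 * Real.sqrt π) by ring,
    ← Real.sqrt_mul (by norm_num)]
  have h0 : Real.sqrt (2*π) ≠ 0 := ne_of_gt (Real.sqrt_pos.mpr (by positivity))
  field_simp

lemma pi_coord (d k : ℕ) (i : Fin d) :
    (∫ x : Fin d → ℝ, (x i)^k ∂(Measure.pi fun _ => gaussianReal 0 1))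
      = (∫ t, t^k ∂(gaussianReal 0 1)) ∧
    Integrable (fun x : Fin d → ℝ => (x i)^k) (Measure.pi fun _ => gaussianReal 0 1) := by
  letI : MeasureSpace ℝ := ⟨gaussianReal 0 1⟩
  haveI : IsProbabilityMeasure (volume : Measure ℝ) := instIsProbabilityMeasureGaussianReal 0 1
  have hvol : (Measure.pi fun _ : Fin d => gaussianReal 0 1) = (volume : Measure (Fin d → ℝ)) :=
    (volume_pi).symm
  set F : Fin d → ℝ → ℝ := fun j t => if j = i then t ^ k else 1 with hF
  have hprod : ∀ x : Fin d → ℝ, (x i)^k = ∏ j, F j (x j) := by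
    intro x
    simp [hF, Finset.prod_ite_eq']
  have hint : ∀ j, Integrable (F j) volume := by
    intro j
    by_cases h : j = i
    · have hFj : F j = fun t => t ^ k := by simp [hF, h]
      rw [hFj]; exact integrable_pow_gauss k
    · simpa [hF, h] using (integrable_const (1:ℝ))
  constructor
  · rw [hvol]
    calc (∫ x : Fin d → ℝ, (x i)^k)
        = ∫ x : Fin d → ℝ, ∏ j, F j (x j) := by
          exact integral_congr_ae (Filter.Eventually.of_forall hprod)
      _ = ∏ j, ∫ t, F j t := MeasureTheory.integral_fintype_prod_eq_prod F
      _ = ∫ t, t^k ∂(gaussianReal 0 1) := by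
          rw [Finset.prod_eq_single i (fun j _ hj => by simp [hF, hj]) (by simp)]
          simp only [hF, if_pos rfl]
          rfl
  · rw [hvol]
    exact (MeasureTheory.Integrable.fintype_prod_dep hint).congr
      (Filter.Eventually.of_forall fun x => (hprod x).symm)

lemma e_meas (d : ℕ) : Measurable ((EuclideanSpace.equiv (Fin d) ℝ).symm :
    (Fin d → ℝ) → EuclideanSpace ℝ (Fin d)) :=
  (EuclideanSpace.equiv (Fin d) ℝ).symm.continuous.measurable

instance stdGaussian_isProb (d : ℕ) : IsProbabilityMeasure (stdGaussian d) :=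
  Measure.isProbabilityMeasure_map (e_meas d).aemeasurable

lemma e_apply (d : ℕ) (x : Fin d → ℝ) (i : Fin d) :
    ((EuclideanSpace.equiv (Fin d) ℝ).symm x) i = x i := rfl

lemma norm_sq_eq {d : ℕ} (u : EuclideanSpace ℝ (Fin d)) : ‖u‖^2 = ∑ i, (u i)^2 := by
  rw [EuclideanSpace.norm_eq, Real.sq_sqrt (by positivity)]
  simp [Real.norm_eq_abs, sq_abs]

lemma std_norm_pow (d k : ℕ) :
    (∫ u, ‖u‖^(2*k) ∂(stdGaussian d)) = ∫ x : Fin d → ℝ, (∑ i, (x i)^2)^k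
      ∂(Measure.pi fun _ => gaussianReal 0 1) := by
  rw [_root_.stdGaussian, integral_map (e_meas d).aemeasurable
    ((show Continuous fun u : EuclideanSpace ℝ (Fin d) => ‖u‖ ^ (2*k) from continuous_norm.pow _).aestronglyMeasurable)]
  refine integral_congr_ae (Filter.Eventually.of_forall fun x => ?_)
  simp only [pow_mul, norm_sq_eq]
  rfl

lemma std_normsq_int (d : ℕ) : ∫ u, ‖u‖^2 ∂(stdGaussian d) = d := by
  have h := std_norm_pow d 1
  norm_num at h
  rw [h, integral_finset_sum _ (fun i _ => (pi_coord d 2 i).2)]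
  simp [(pi_coord d 2 _).1, moment_two]

lemma std_normsq_integrable (d : ℕ) :
    Integrable (fun u => ‖u‖^2) (stdGaussian d) := by
  rw [_root_.stdGaussian, integrable_map_measure ((show Continuous fun u : EuclideanSpace ℝ (Fin d) => ‖u‖ ^ 2 from continuous_norm.pow _).aestronglyMeasurable)
    (e_meas d).aemeasurable]
  have : ((fun u : EuclideanSpace ℝ (Fin d) => ‖u‖^2) ∘ (EuclideanSpace.equiv (Fin d) ℝ).symm)
      = fun x : Fin d → ℝ => ∑ i, (x i)^2 := by
    funext x
    simp only [Function.comp_apply, norm_sq_eq]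
    rfl
  rw [this]
  exact integrable_finset_sum _ (fun i _ => (pi_coord d 2 i).2)

lemma std_norm4_integrable (d : ℕ) :
    Integrable (fun u => ‖u‖^4) (stdGaussian d) := by
  rw [_root_.stdGaussian, integrable_map_measure ((show Continuous fun u : EuclideanSpace ℝ (Fin d) => ‖u‖ ^ 4 from continuous_norm.pow _).aestronglyMeasurable)
    (e_meas d).aemeasurable]
  have hg : Integrable (fun x : Fin d → ℝ => (d:ℝ) * ∑ i, (x i)^4)
      (Measure.pi fun _ => gaussianReal 0 1) :=
    (integrable_finset_sum _ (fun i _ => (pi_coord d 4 i).2)).const_mul _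
  refine hg.mono' ?_ (Filter.Eventually.of_forall fun x => ?_)
  · exact ((continuous_norm.pow 4).comp
      (EuclideanSpace.equiv (Fin d) ℝ).symm.continuous).aestronglyMeasurable
  · have h1 : ‖((fun u : EuclideanSpace ℝ (Fin d) => ‖u‖^4) ∘
        (EuclideanSpace.equiv (Fin d) ℝ).symm) x‖ = (∑ i, (x i)^2)^2 := by
      simp only [Function.comp_apply]
      rw [Real.norm_eq_abs, abs_of_nonneg (by positivity),
        show (4:ℕ) = 2*2 from rfl, pow_mul, norm_sq_eq]
      rfl
    rw [h1]
    calc (∑ i, (x i)^2)^2 ≤ ((Finset.univ : Finset (Fin d)).card : ℝ) * ∑ i, ((x i)^2)^2 :=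
          sq_sum_le_card_mul_sum_sq
      _ = (d:ℝ) * ∑ i, (x i)^4 := by
          simp [Finset.card_univ, ← pow_mul]

lemma sum_sq_sq_le (d : ℕ) (x : Fin d → ℝ) :
    (∑ i, (x i)^2)^2 ≤ (d:ℝ) * ∑ i, (x i)^4 := by
  calc (∑ i, (x i)^2)^2 ≤ ((Finset.univ : Finset (Fin d)).card : ℝ) * ∑ i, ((x i)^2)^2 :=
        sq_sum_le_card_mul_sum_sq
    _ = (d:ℝ) * ∑ i, (x i)^4 := by
        simp [Finset.card_univ, ← pow_mul]

lemma std_norm4_le (d : ℕ) : ∫ u, ‖u‖^4 ∂(stdGaussian d) ≤ 3 * (d:ℝ)^2 := by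
  have h := std_norm_pow d 2
  norm_num at h
  rw [h]
  have hg : Integrable (fun x : Fin d → ℝ => (d:ℝ) * ∑ i, (x i)^4)
      (Measure.pi fun _ => gaussianReal 0 1) :=
    (integrable_finset_sum _ (fun i _ => (pi_coord d 4 i).2)).const_mul _
  refine le_trans (integral_mono_of_nonneg (Filter.Eventually.of_forall fun x => by positivity)
    hg (Filter.Eventually.of_forall fun x => sum_sq_sq_le d x)) ?_
  rw [integral_const_mul, integral_finset_sum _ (fun i _ => (pi_coord d 4 i).2)]
  simp only [(pi_coord d 4 _).1, moment_four, Finset.sum_const, Finset.card_univ,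
    Fintype.card_fin, nsmul_eq_mul]
  nlinarith [sq_nonneg (d:ℝ)]

section Prod3
variable {d : ℕ}

lemma prod3_integral (h₁ h₂ h₃ : EuclideanSpace ℝ (Fin d) → ℝ) :
    ∫ w : EuclideanSpace ℝ (Fin d) × (EuclideanSpace ℝ (Fin d) × EuclideanSpace ℝ (Fin d)),
        h₁ w.1 * (h₂ w.2.1 * h₃ w.2.2)
      ∂((stdGaussian d).prod ((stdGaussian d).prod (stdGaussian d)))
    = (∫ u, h₁ u ∂(stdGaussian d)) * ((∫ u, h₂ u ∂(stdGaussian d)) *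
        (∫ u, h₃ u ∂(stdGaussian d))) := by
  exact (MeasureTheory.integral_prod_mul (μ := stdGaussian d)
      (ν := (stdGaussian d).prod (stdGaussian d)) h₁
      (fun y : EuclideanSpace ℝ (Fin d) × EuclideanSpace ℝ (Fin d) => h₂ y.1 * h₃ y.2)).trans
    (by rw [MeasureTheory.integral_prod_mul])

lemma prod3_integrable {h₁ h₂ h₃ : EuclideanSpace ℝ (Fin d) → ℝ}
    (H1 : Integrable h₁ (stdGaussian d)) (H2 : Integrable h₂ (stdGaussian d))
    (H3 : Integrable h₃ (stdGaussian d)) :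
    Integrable (fun w : EuclideanSpace ℝ (Fin d) ×
        (EuclideanSpace ℝ (Fin d) × EuclideanSpace ℝ (Fin d)) =>
        h₁ w.1 * (h₂ w.2.1 * h₃ w.2.2))
      ((stdGaussian d).prod ((stdGaussian d).prod (stdGaussian d))) :=
  H1.mul_prod (H2.mul_prod H3)

end Prod3


lemma core_ineq (L₀ μ ν A B C Δ : ℝ) (hμ : 0 < μ) (hν : 0 ≤ ν)
    (hA : 0 ≤ A) (hB : 0 ≤ B) (hC : 0 ≤ C)
    (hΔsq : Δ^2 ≤ (L₀ * (μ*A + ν*B + ν*C))^2) :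
    Δ^2 * A^2 / μ^2 ≤ (L₀/μ)^2 * ((μ^2 + 2*μ*ν) * A^4 +
      ((μ*ν + 2*ν^2) * (A^2*B^2) + (μ*ν + 2*ν^2) * (A^2*C^2))) := by
  have hRHS : (L₀/μ)^2 * ((μ^2 + 2*μ*ν) * A^4 +
      ((μ*ν + 2*ν^2) * (A^2*B^2) + (μ*ν + 2*ν^2) * (A^2*C^2)))
      = L₀^2 * ((μ^2 + 2*μ*ν) * A^4 +
        ((μ*ν + 2*ν^2) * (A^2*B^2) + (μ*ν + 2*ν^2) * (A^2*C^2))) / μ^2 := by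
    rw [div_pow]; ring
  rw [hRHS]
  have h1 : Δ^2 * A^2 ≤ (L₀ * (μ*A + ν*B + ν*C))^2 * A^2 :=
    mul_le_mul_of_nonneg_right hΔsq (sq_nonneg A)
  gcongr ?_ / _
  refine h1.trans ?_
  nlinarith [mul_nonneg (mul_nonneg hμ.le hν) (sq_nonneg (A*A - A*B)),
    mul_nonneg (mul_nonneg hμ.le hν) (sq_nonneg (A*A - A*C)),
    mul_nonneg (mul_nonneg hν hν) (sq_nonneg (A*B - A*C)),
    sq_nonneg L₀, sq_nonneg A]

set_option maxHeartbeats 2000000 in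
/-- second-moment bound for the noisy two-point gradient estimator
`g_{μ,ν}(x) = ((f(x + μu + νv₁) − f(x + νv₂))/μ) u` with `u, v₁, v₂` independent
standard Gaussians: `E[‖g_{μ,ν}(x)‖²] ≤ 4 L₀² (d+4)² (ν/μ + 1)²`. -/
theorem noisy_estimator_second_moment
    (d : ℕ) (f : EuclideanSpace ℝ (Fin d) → ℝ) (L₀ : ℝ) (hL₀ : 0 ≤ L₀)
    (hf : ∀ x y, |f y - f x| ≤ L₀ * ‖y - x‖)
    (μ ν : ℝ) (hμ : 0 < μ) (hν : 0 ≤ ν) (x : EuclideanSpace ℝ (Fin d)) :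
    (∫ w, ‖((f (x + μ • w.1 + ν • w.2.1) - f (x + ν • w.2.2)) / μ) • w.1‖ ^ 2
        ∂((stdGaussian d).prod ((stdGaussian d).prod (stdGaussian d)))) ≤
      4 * L₀ ^ 2 * ((d : ℝ) + 4) ^ 2 * (ν / μ + 1) ^ 2 := by
  set P := (stdGaussian d).prod ((stdGaussian d).prod (stdGaussian d)) with hP
  set c₁ : ℝ := μ^2 + 2*μ*ν with hc₁
  set c₂ : ℝ := μ*ν + 2*ν^2 with hc₂
  set H : EuclideanSpace ℝ (Fin d) × (EuclideanSpace ℝ (Fin d) × EuclideanSpace ℝ (Fin d)) → ℝ :=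
    fun w => (L₀/μ)^2 * (c₁ * ‖w.1‖^4 +
      (c₂ * (‖w.1‖^2 * ‖w.2.1‖^2) + c₂ * (‖w.1‖^2 * ‖w.2.2‖^2))) with hH
  have hInt1 : Integrable (fun w : EuclideanSpace ℝ (Fin d) ×
      (EuclideanSpace ℝ (Fin d) × EuclideanSpace ℝ (Fin d)) => ‖w.1‖^4) P := by
    have h := prod3_integrable (d := d) (std_norm4_integrable d)
      (integrable_const (1:ℝ)) (integrable_const (1:ℝ))
    exact h.congr (Filter.Eventually.of_forall fun w => by norm_num)
  have hInt2 : Integrable (fun w : EuclideanSpace ℝ (Fin d) ×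
      (EuclideanSpace ℝ (Fin d) × EuclideanSpace ℝ (Fin d)) => ‖w.1‖^2 * ‖w.2.1‖^2) P := by
    have h := prod3_integrable (d := d) (std_normsq_integrable d) (std_normsq_integrable d)
      (integrable_const (1:ℝ))
    exact h.congr (Filter.Eventually.of_forall fun w => by norm_num)
  have hInt3 : Integrable (fun w : EuclideanSpace ℝ (Fin d) ×
      (EuclideanSpace ℝ (Fin d) × EuclideanSpace ℝ (Fin d)) => ‖w.1‖^2 * ‖w.2.2‖^2) P := by
    have h := prod3_integrable (d := d) (std_normsq_integrable d) (integrable_const (1:ℝ))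
      (std_normsq_integrable d)
    exact h.congr (Filter.Eventually.of_forall fun w => by norm_num)
  have hV1 : (∫ w, ‖w.1‖^4 ∂P) = ∫ u, ‖u‖^4 ∂(stdGaussian d) := by
    have h := prod3_integral (d := d) (fun u => ‖u‖^4) (fun _ => 1) (fun _ => 1)
    have h2 : (∫ w, ‖w.1‖^4 ∂P) = ∫ w : EuclideanSpace ℝ (Fin d) ×
        (EuclideanSpace ℝ (Fin d) × EuclideanSpace ℝ (Fin d)), ‖w.1‖^4 * (1*1) ∂P := by
      norm_num
    rw [h2, h]
    norm_num
  have hV2 : (∫ w, ‖w.1‖^2 * ‖w.2.1‖^2 ∂P) = (d:ℝ) * d := by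
    have h := prod3_integral (d := d) (fun u => ‖u‖^2) (fun u => ‖u‖^2) (fun _ => 1)
    have h2 : (∫ w, ‖w.1‖^2 * ‖w.2.1‖^2 ∂P) = ∫ w : EuclideanSpace ℝ (Fin d) ×
        (EuclideanSpace ℝ (Fin d) × EuclideanSpace ℝ (Fin d)), ‖w.1‖^2 * (‖w.2.1‖^2 * 1) ∂P := by
      norm_num
    rw [h2, h, std_normsq_int]
    norm_num
  have hV3 : (∫ w, ‖w.1‖^2 * ‖w.2.2‖^2 ∂P) = (d:ℝ) * d := by
    have h := prod3_integral (d := d) (fun u => ‖u‖^2) (fun _ => 1) (fun u => ‖u‖^2)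
    have h2 : (∫ w, ‖w.1‖^2 * ‖w.2.2‖^2 ∂P) = ∫ w : EuclideanSpace ℝ (Fin d) ×
        (EuclideanSpace ℝ (Fin d) × EuclideanSpace ℝ (Fin d)), ‖w.1‖^2 * (1 * ‖w.2.2‖^2) ∂P := by
      norm_num
    rw [h2, h, std_normsq_int]
    norm_num
  have hg2 : Integrable (fun w : EuclideanSpace ℝ (Fin d) ×
      (EuclideanSpace ℝ (Fin d) × EuclideanSpace ℝ (Fin d)) =>
      c₂ * (‖w.1‖^2 * ‖w.2.1‖^2) + c₂ * (‖w.1‖^2 * ‖w.2.2‖^2)) P :=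
    (hInt2.const_mul _).add (hInt3.const_mul _)
  have HInt : Integrable H P := by
    refine ((hInt1.const_mul c₁).add hg2).const_mul _
  -- pointwise bound
  have key : ∀ w : EuclideanSpace ℝ (Fin d) × (EuclideanSpace ℝ (Fin d) × EuclideanSpace ℝ (Fin d)),
      ‖((f (x + μ • w.1 + ν • w.2.1) - f (x + ν • w.2.2)) / μ) • w.1‖ ^ 2 ≤ H w := by
    rintro ⟨u, v₁, v₂⟩
    have hΔ : |f (x + μ • u + ν • v₁) - f (x + ν • v₂)| ≤ L₀ * (μ*‖u‖ + ν*‖v₁‖ + ν*‖v₂‖) := by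
      refine le_trans (hf _ _) ?_
      have hveq : (x + μ • u + ν • v₁) - (x + ν • v₂) = μ • u + ν • v₁ - ν • v₂ := by abel
      rw [hveq]
      refine mul_le_mul_of_nonneg_left ?_ hL₀
      calc ‖μ • u + ν • v₁ - ν • v₂‖ ≤ ‖μ • u + ν • v₁‖ + ‖ν • v₂‖ := norm_sub_le _ _
        _ ≤ ‖μ • u‖ + ‖ν • v₁‖ + ‖ν • v₂‖ := add_le_add_left (norm_add_le _ _) _
        _ = μ*‖u‖ + ν*‖v₁‖ + ν*‖v₂‖ := by
            rw [norm_smul, norm_smul, norm_smul, Real.norm_eq_abs, Real.norm_eq_abs,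
              abs_of_pos hμ, abs_of_nonneg hν]
    have hΔsq : (f (x + μ • u + ν • v₁) - f (x + ν • v₂))^2
        ≤ (L₀ * (μ*‖u‖ + ν*‖v₁‖ + ν*‖v₂‖))^2 := by
      rw [← sq_abs]
      exact pow_le_pow_left₀ (abs_nonneg _) hΔ 2
    have hLHS : ‖((f (x + μ • u + ν • v₁) - f (x + ν • v₂))/μ) • u‖^2
        = (f (x + μ • u + ν • v₁) - f (x + ν • v₂))^2 * ‖u‖^2 / μ^2 := by
      rw [norm_smul, mul_pow, Real.norm_eq_abs, sq_abs]
      ring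
    calc ‖((f (x + μ • u + ν • v₁) - f (x + ν • v₂))/μ) • u‖^2
        = (f (x + μ • u + ν • v₁) - f (x + ν • v₂))^2 * ‖u‖^2 / μ^2 := hLHS
      _ ≤ (L₀/μ)^2 * (c₁ * ‖u‖^4 + (c₂ * (‖u‖^2*‖v₁‖^2) + c₂ * (‖u‖^2*‖v₂‖^2))) := by
          rw [hc₁, hc₂]
          exact core_ineq L₀ μ ν ‖u‖ ‖v₁‖ ‖v₂‖ _ hμ hν (norm_nonneg _) (norm_nonneg _)
            (norm_nonneg _) hΔsq
      _ = H (u, (v₁, v₂)) := rfl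
  have step1 : (∫ w, ‖((f (x + μ • w.1 + ν • w.2.1) - f (x + ν • w.2.2)) / μ) • w.1‖ ^ 2 ∂P)
      ≤ ∫ w, H w ∂P :=
    integral_mono_of_nonneg (Filter.Eventually.of_forall fun w => sq_nonneg _) HInt
      (Filter.Eventually.of_forall key)
  have hIntH : (∫ w, H w ∂P) = (L₀/μ)^2 * (c₁ * (∫ u, ‖u‖^4 ∂(stdGaussian d)) +
      (c₂ * ((d:ℝ)*d) + c₂ * ((d:ℝ)*d))) := by
    rw [hH]
    rw [integral_const_mul, integral_add (hInt1.const_mul c₁) hg2,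
      integral_add (hInt2.const_mul c₂) (hInt3.const_mul c₂),
      integral_const_mul, integral_const_mul, integral_const_mul, hV1, hV2, hV3]
  have hc₁nn : 0 ≤ c₁ := by rw [hc₁]; positivity
  have hc₂nn : 0 ≤ c₂ := by rw [hc₂]; positivity
  have step2 : (∫ w, H w ∂P)
      ≤ (L₀/μ)^2 * (c₁ * (3*(d:ℝ)^2) + (c₂ * ((d:ℝ)*d) + c₂ * ((d:ℝ)*d))) := by
    rw [hIntH]
    refine mul_le_mul_of_nonneg_left ?_ (by positivity)
    exact add_le_add_left (mul_le_mul_of_nonneg_left (std_norm4_le d) hc₁nn) _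
  refine le_trans (le_trans step1 step2) ?_
  have e1 : (L₀/μ)^2 * (c₁ * (3*(d:ℝ)^2) + (c₂ * ((d:ℝ)*d) + c₂ * ((d:ℝ)*d)))
      = L₀^2 * (d:ℝ)^2 * (3 + 8*(ν/μ) + 4*(ν/μ)^2) := by
    rw [hc₁, hc₂]
    field_simp
    ring
  rw [e1]
  have htnn : 0 ≤ ν/μ := div_nonneg hν hμ.le
  have hd2 : (d:ℝ)^2 ≤ ((d:ℝ)+4)^2 := by nlinarith [Nat.cast_nonneg (α := ℝ) d]
  nlinarith [mul_nonneg (sq_nonneg L₀) (sq_nonneg (d:ℝ)),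
    mul_le_mul_of_nonneg_left hd2 (mul_nonneg (sq_nonneg L₀) (sq_nonneg (ν/μ+1))),
    mul_nonneg (mul_nonneg (sq_nonneg L₀) (sq_nonneg (d:ℝ))) htnn,
    mul_nonneg (mul_nonneg (sq_nonneg L₀) (sq_nonneg (d:ℝ))) (mul_nonneg htnn htnn)]
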